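/- Let ρ be any 2^n × 2^n complex matrix, let U = U_1 ⊗ U_2 ⊗ ⋯ ⊗ U_n be a Kronecker product of 2×2 unitary matrices U_i, and let R ⊆ {1, ..., n} be any subset. Then Σ_{P ∈ P_n^+ : supp(P) = R} |Tr(P ρ)|² = Σ_{P ∈ P_n^+ : supp(P) = R} |Tr(P U ρ U†)|². -/

import Mathlib

open Matrix

/-- The single-qubit Pauli matrices I, X, Y, Z. -/
noncomputable def pauli : Fin 4 → Matrix (Fin 2) (Fin 2) ℂ
  | 0 => 1
  | 1 => !![0, 1; 1, 0]
  | 2 => !![0, -Complex.I; Complex.I, 0]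
  | 3 => !![1, 0; 0, -1]

/-- The n-qubit Pauli string (with phase +1). -/
noncomputable def pauliString {n : ℕ} (s : Fin n → Fin 4) :
    Matrix (Fin n → Fin 2) (Fin n → Fin 2) ℂ :=
  fun x y => ∏ i, pauli (s i) (x i) (y i)

/-- The Kronecker product U_1 ⊗ ⋯ ⊗ U_n of single-qubit matrices. -/
noncomputable def tensorFold {n : ℕ} (U : Fin n → Matrix (Fin 2) (Fin 2) ℂ) :
    Matrix (Fin n → Fin 2) (Fin n → Fin 2) ℂ :=
  fun x y => ∏ i, U i (x i) (y i)

/-! ### Auxiliary single-qubit lemmas -/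

lemma pauli_channel (E : Matrix (Fin 2) (Fin 2) ℂ) :
    ∑ t : Fin 4, pauli t * E * pauli t = (2 * E.trace) • 1 := by
  ext i j
  fin_cases i <;> fin_cases j <;>
    simp [pauli, Matrix.mul_apply, Fin.sum_univ_four, Matrix.trace, Matrix.diag,
      Fin.sum_univ_two, Matrix.one_apply, Matrix.vecMul, dotProduct] <;>
    ring_nf <;> simp [Complex.I_sq] <;> ring

lemma conj_pauli (t : Fin 4) (a b : Fin 2) :
    (starRingEnd ℂ) (pauli t a b) = pauli t b a := by
  fin_cases t <;> fin_cases a <;> fin_cases b <;> simp [pauli, Matrix.one_apply]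

lemma entry_std (M N : Matrix (Fin 2) (Fin 2) ℂ) (p q p' q' : Fin 2) :
    ((M * single p q' 1 * N) : Matrix (Fin 2) (Fin 2) ℂ) q p' = M q p * N q' p' := by
  fin_cases p <;> fin_cases q' <;>
    simp [Matrix.mul_apply, Matrix.single, Fin.sum_univ_two]

lemma channel_B (V : Matrix (Fin 2) (Fin 2) ℂ) (hV : Vᴴ * V = 1)
    (B : Finset (Fin 4)) (hB : B = {0} ∨ B = ({1,2,3} : Finset (Fin 4)))
    (E : Matrix (Fin 2) (Fin 2) ℂ) :
    ∑ t ∈ B, (Vᴴ * pauli t * V) * E * (Vᴴ * pauli t * V)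
      = ∑ t ∈ B, pauli t * E * pauli t := by
  have hM : ∀ E', ∑ t : Fin 4, (Vᴴ * pauli t * V) * E' * (Vᴴ * pauli t * V)
      = (2 * E'.trace) • 1 := by
    intro E'
    have : ∀ t : Fin 4, (Vᴴ * pauli t * V) * E' * (Vᴴ * pauli t * V)
        = Vᴴ * (pauli t * (V * E' * Vᴴ) * pauli t) * V := by
      intro t; noncomm_ring
    rw [Finset.sum_congr rfl fun t _ => this t, ← Finset.sum_mul, ← Finset.mul_sum,
      pauli_channel, Matrix.mul_smul, Matrix.smul_mul, Matrix.mul_one, hV]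
    congr 2
    rw [Matrix.trace_mul_cycle, hV, Matrix.one_mul]
  have h0 : (Vᴴ * pauli 0 * V) = 1 := by
    rw [show pauli 0 = 1 from rfl, Matrix.mul_one, hV]
  rcases hB with rfl | rfl
  · simp only [Finset.sum_singleton, show pauli 0 = 1 from rfl, Matrix.mul_one]
    rw [hV]; simp
  · have huniv : (Finset.univ : Finset (Fin 4)) = insert 0 ({1,2,3} : Finset (Fin 4)) := by decide
    have h1 : ∑ t ∈ ({1,2,3} : Finset (Fin 4)), (Vᴴ * pauli t * V) * E * (Vᴴ * pauli t * V)
        = (2 * E.trace) • 1 - E := by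
      have := hM E
      rw [huniv, Finset.sum_insert (by decide)] at this
      rw [h0] at this
      simp only [Matrix.one_mul, Matrix.mul_one] at this
      linear_combination (norm := abel) this
    have h2 : ∑ t ∈ ({1,2,3} : Finset (Fin 4)), pauli t * E * pauli t
        = (2 * E.trace) • 1 - E := by
      have := pauli_channel E
      rw [huniv, Finset.sum_insert (by decide), show pauli 0 = 1 from rfl] at this
      simp only [Matrix.one_mul, Matrix.mul_one] at this
      linear_combination (norm := abel) this
    rw [h1, h2]

lemma key_kernel (V : Matrix (Fin 2) (Fin 2) ℂ) (hV : Vᴴ * V = 1)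
    (B : Finset (Fin 4)) (hB : B = {0} ∨ B = ({1,2,3} : Finset (Fin 4)))
    (p q p' q' : Fin 2) :
    ∑ t ∈ B, (Vᴴ * pauli t * V) q p * (Vᴴ * pauli t * V) q' p'
      = ∑ t ∈ B, pauli t q p * pauli t q' p' := by
  have := congrFun (congrFun (channel_B V hV B hB (single p q' 1)) q) p'
  simpa [Matrix.sum_apply, entry_std] using this

/-! ### Tensor product lemmas -/

variable {n : ℕ}

lemma tensorFold_mul (A B : Fin n → Matrix (Fin 2) (Fin 2) ℂ) :
    tensorFold A * tensorFold B = tensorFold (fun i => A i * B i) := by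
  ext x y
  calc (tensorFold A * tensorFold B) x y
      = ∑ z : Fin n → Fin 2, ∏ i, (A i (x i) (z i) * B i (z i) (y i)) := by
        rw [Matrix.mul_apply]
        exact Finset.sum_congr rfl fun z _ => (Finset.prod_mul_distrib).symm
    _ = ∏ i, ∑ t : Fin 2, A i (x i) t * B i t (y i) := by
        rw [Fintype.prod_sum]
    _ = ∏ i, (A i * B i) (x i) (y i) := by
        exact Finset.prod_congr rfl fun i _ => (Matrix.mul_apply).symm

lemma tensorFold_conjT (A : Fin n → Matrix (Fin 2) (Fin 2) ℂ) :
    (tensorFold A)ᴴ = tensorFold (fun i => (A i)ᴴ) := by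
  ext x y
  simp only [tensorFold, Matrix.conjTranspose_apply]
  exact map_prod (starRingEnd ℂ) _ _

lemma pauliString_eq_tensorFold (s : Fin n → Fin 4) :
    pauliString s = tensorFold (fun i => pauli (s i)) := rfl

lemma pauliString_herm (s : Fin n → Fin 4) : (pauliString s)ᴴ = pauliString s := by
  rw [pauliString_eq_tensorFold, tensorFold_conjT]
  ext x y
  refine Finset.prod_congr rfl fun i _ => ?_
  exact conj_pauli (s i) (y i) (x i)

lemma conj_tensor (U : Fin n → Matrix (Fin 2) (Fin 2) ℂ) (s : Fin n → Fin 4) :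
    (tensorFold U)ᴴ * pauliString s * tensorFold U
      = tensorFold (fun i => (U i)ᴴ * pauli (s i) * U i) := by
  rw [pauliString_eq_tensorFold, tensorFold_conjT, tensorFold_mul, tensorFold_mul]

/-! ### Sum rearrangement -/

lemma swap_out {α β : Type*} [Fintype β] (F : Finset α) (f : α → β → ℂ) :
    ∑ s ∈ F, ∑ x, f s x = ∑ x, ∑ s ∈ F, f s x := Finset.sum_comm

lemma trace_mul_expand (H σ : Matrix (Fin n → Fin 2) (Fin n → Fin 2) ℂ) :
    (H * σ).trace = ∑ q, ∑ p, H q p * σ p q := by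
  simp [Matrix.trace, Matrix.diag, Matrix.mul_apply]

lemma sum_TT (F : Finset (Fin n → Fin 4))
    (G : (Fin n → Fin 4) → Matrix (Fin n → Fin 2) (Fin n → Fin 2) ℂ)
    (ρ ρ' : Matrix (Fin n → Fin 2) (Fin n → Fin 2) ℂ) :
    ∑ s ∈ F, (G s * ρ).trace * (G s * ρ').trace
      = ∑ q : Fin n → Fin 2, ∑ p : Fin n → Fin 2, ∑ q' : Fin n → Fin 2, ∑ p' : Fin n → Fin 2,
          ρ p q * ρ' p' q' * ∑ s ∈ F, G s q p * G s q' p' := by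
  simp_rw [trace_mul_expand, Finset.sum_mul, Finset.mul_sum]
  rw [swap_out]
  refine Finset.sum_congr rfl fun q _ => ?_
  rw [swap_out]
  refine Finset.sum_congr rfl fun p _ => ?_
  rw [swap_out]
  refine Finset.sum_congr rfl fun q' _ => ?_
  rw [swap_out]
  refine Finset.sum_congr rfl fun p' _ => ?_
  exact Finset.sum_congr rfl fun s _ => by ring

/-! ### The kernel identity over the pi-Finset -/

set_option maxHeartbeats 1000000 in
lemma kernel_eq (U : Fin n → Matrix (Fin 2) (Fin 2) ℂ) (hU : ∀ i, (U i)ᴴ * U i = 1)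
    (A : Fin n → Finset (Fin 4)) (hA : ∀ i, A i = {0} ∨ A i = ({1,2,3} : Finset (Fin 4)))
    (q p q' p' : Fin n → Fin 2) :
    ∑ s ∈ Fintype.piFinset A,
        ((tensorFold U)ᴴ * pauliString s * tensorFold U) q p
          * ((tensorFold U)ᴴ * pauliString s * tensorFold U) q' p'
      = ∑ s ∈ Fintype.piFinset A, pauliString s q p * pauliString s q' p' := by
  calc ∑ s ∈ Fintype.piFinset A,
        ((tensorFold U)ᴴ * pauliString s * tensorFold U) q p
          * ((tensorFold U)ᴴ * pauliString s * tensorFold U) q' p'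
      = ∑ s ∈ Fintype.piFinset A,
          ∏ i, (((U i)ᴴ * pauli (s i) * U i) (q i) (p i)
            * ((U i)ᴴ * pauli (s i) * U i) (q' i) (p' i)) := by
        refine Finset.sum_congr rfl fun s _ => ?_
        simp only [conj_tensor, tensorFold]
        exact (Finset.prod_mul_distrib).symm
    _ = ∏ i, ∑ t ∈ A i, (((U i)ᴴ * pauli t * U i) (q i) (p i)
            * ((U i)ᴴ * pauli t * U i) (q' i) (p' i)) :=
        (Finset.prod_univ_sum A (fun i t => ((U i)ᴴ * pauli t * U i) (q i) (p i)
          * ((U i)ᴴ * pauli t * U i) (q' i) (p' i))).symm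
    _ = ∏ i, ∑ t ∈ A i, pauli t (q i) (p i) * pauli t (q' i) (p' i) := by
        exact Finset.prod_congr rfl fun i _ =>
          key_kernel (U i) (hU i) (A i) (hA i) (p i) (q i) (p' i) (q' i)
    _ = ∑ s ∈ Fintype.piFinset A,
          ∏ i, (pauli (s i) (q i) (p i) * pauli (s i) (q' i) (p' i)) :=
        Finset.prod_univ_sum A (fun i t => pauli t (q i) (p i) * pauli t (q' i) (p' i))
    _ = ∑ s ∈ Fintype.piFinset A, pauliString s q p * pauliString s q' p' := by
        refine Finset.sum_congr rfl fun s _ => ?_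
        simp only [pauliString]
        exact Finset.prod_mul_distrib

/-! ### The bilinear invariance -/

set_option maxHeartbeats 1000000 in
lemma main_bilinear (U : Fin n → Matrix (Fin 2) (Fin 2) ℂ) (hU : ∀ i, (U i)ᴴ * U i = 1)
    (A : Fin n → Finset (Fin 4)) (hA : ∀ i, A i = {0} ∨ A i = ({1,2,3} : Finset (Fin 4)))
    (ρ ρ' : Matrix (Fin n → Fin 2) (Fin n → Fin 2) ℂ) :
    ∑ s ∈ Fintype.piFinset A,
        (pauliString s * (tensorFold U * ρ * (tensorFold U)ᴴ)).trace
          * (pauliString s * (tensorFold U * ρ' * (tensorFold U)ᴴ)).trace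
      = ∑ s ∈ Fintype.piFinset A,
          (pauliString s * ρ).trace * (pauliString s * ρ').trace := by
  have hG : ∀ (s : Fin n → Fin 4) (σ : Matrix (Fin n → Fin 2) (Fin n → Fin 2) ℂ),
      (pauliString s * (tensorFold U * σ * (tensorFold U)ᴴ)).trace
        = (((tensorFold U)ᴴ * pauliString s * tensorFold U) * σ).trace := by
    intro s σ
    rw [show pauliString s * (tensorFold U * σ * (tensorFold U)ᴴ)
        = (pauliString s * tensorFold U * σ) * (tensorFold U)ᴴ by noncomm_ring,
      Matrix.trace_mul_comm,
      show (tensorFold U)ᴴ * (pauliString s * tensorFold U * σ)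
        = ((tensorFold U)ᴴ * pauliString s * tensorFold U) * σ by noncomm_ring]
  simp_rw [hG]
  rw [sum_TT, sum_TT]
  refine Finset.sum_congr rfl fun q _ => Finset.sum_congr rfl fun p _ =>
    Finset.sum_congr rfl fun q' _ => Finset.sum_congr rfl fun p' _ => ?_
  rw [kernel_eq U hU A hA q p q' p']

/-! ### Conjugate of the trace -/

lemma conj_traceP (s : Fin n → Fin 4) (σ : Matrix (Fin n → Fin 2) (Fin n → Fin 2) ℂ) :
    (starRingEnd ℂ) ((pauliString s * σ).trace) = (pauliString s * σᴴ).trace := by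
  have : ((pauliString s * σ)ᴴ).trace = star ((pauliString s * σ).trace) :=
    Matrix.trace_conjTranspose _
  rw [show (starRingEnd ℂ) ((pauliString s * σ).trace) = star ((pauliString s * σ).trace) from rfl,
    ← this, Matrix.conjTranspose_mul, pauliString_herm, Matrix.trace_mul_comm]

/-! ### The main theorem -/

set_option maxHeartbeats 1000000 in
/-- For any 2^n × 2^n matrix ρ, any tensor product U = U_1 ⊗ ⋯ ⊗ U_n of
single-qubit unitaries, and any subset R ⊆ {1,...,n},
Σ_{P ∈ P_n^+ : supp(P) = R} |Tr(Pρ)|² = Σ_{P ∈ P_n^+ : supp(P) = R} |Tr(P U ρ U†)|². -/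
theorem pauli_support_invariance {n : ℕ}
    (ρ : Matrix (Fin n → Fin 2) (Fin n → Fin 2) ℂ)
    (U : Fin n → Matrix (Fin 2) (Fin 2) ℂ)
    (hU : ∀ i, U i ∈ Matrix.unitaryGroup (Fin 2) ℂ)
    (R : Finset (Fin n)) :
    ∑ s ∈ Finset.univ.filter (fun s : Fin n → Fin 4 => ∀ i, s i ≠ 0 ↔ i ∈ R),
        ‖(pauliString s * ρ).trace‖ ^ 2
      = ∑ s ∈ Finset.univ.filter (fun s : Fin n → Fin 4 => ∀ i, s i ≠ 0 ↔ i ∈ R),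
          ‖(pauliString s * (tensorFold U * ρ * (tensorFold U)ᴴ)).trace‖ ^ 2 := by
  classical
  set A : Fin n → Finset (Fin 4) :=
    fun i => if i ∈ R then ({1,2,3} : Finset (Fin 4)) else {0} with hA_def
  have hfilter : Finset.univ.filter (fun s : Fin n → Fin 4 => ∀ i, s i ≠ 0 ↔ i ∈ R)
      = Fintype.piFinset A := by
    ext s
    simp only [Finset.mem_filter, Finset.mem_univ, true_and, Fintype.mem_piFinset]
    refine forall_congr' fun i => ?_
    by_cases h : i ∈ R
    · simp only [hA_def, h, if_true, iff_true]
      generalize s i = a; revert a; decide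
    · simp only [hA_def, h, if_false, iff_false]
      generalize s i = a; revert a; decide
  have hA : ∀ i, A i = {0} ∨ A i = ({1,2,3} : Finset (Fin 4)) := by
    intro i
    by_cases h : i ∈ R <;> simp [hA_def, h]
  have hU' : ∀ i, (U i)ᴴ * U i = 1 := by
    intro i
    have := (Unitary.mem_iff.mp (hU i)).1
    rwa [Matrix.star_eq_conjTranspose] at this
  rw [hfilter]
  have hnorm : ∀ (T : (Fin n → Fin 4) → ℂ),
      ∑ s ∈ Fintype.piFinset A, ‖T s‖ ^ 2
        = (∑ s ∈ Fintype.piFinset A, T s * (starRingEnd ℂ) (T s)).re := by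
    intro T
    rw [Complex.re_sum]
    refine Finset.sum_congr rfl fun s _ => ?_
    rw [Complex.mul_conj]
    simp [Complex.normSq_eq_norm_sq, ← Complex.ofReal_pow]
  rw [hnorm, hnorm]
  congr 1
  have e1 : ∑ s ∈ Fintype.piFinset A,
      (pauliString s * ρ).trace * (starRingEnd ℂ) ((pauliString s * ρ).trace)
      = ∑ s ∈ Fintype.piFinset A,
        (pauliString s * ρ).trace * (pauliString s * ρᴴ).trace := by
    exact Finset.sum_congr rfl fun s _ => by rw [conj_traceP]
  have e2 : ∑ s ∈ Fintype.piFinset A,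
      (pauliString s * (tensorFold U * ρ * (tensorFold U)ᴴ)).trace
        * (starRingEnd ℂ) ((pauliString s * (tensorFold U * ρ * (tensorFold U)ᴴ)).trace)
      = ∑ s ∈ Fintype.piFinset A,
        (pauliString s * (tensorFold U * ρ * (tensorFold U)ᴴ)).trace
          * (pauliString s * (tensorFold U * ρᴴ * (tensorFold U)ᴴ)).trace := by
    refine Finset.sum_congr rfl fun s _ => ?_
    rw [conj_traceP]
    congr 2
    simp [Matrix.conjTranspose_mul, Matrix.mul_assoc]
  rw [e1, e2, main_bilinear U hU' A hA ρ ρᴴ]
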